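/- Let L > 0, J, N ∈ ℕ with J ≥ N ≥ 2, γ ∈ (0, 1], (c_n) be a sequence of real numbers bounded above by L, and a_n = N/(γ(n + J)) for all n ∈ ℕ. Suppose (s_n) is a sequence of nonnegative real numbers with s_0 ≤ L such that s_{n+1} ≤ (1 − γ·a_{n+1})·s_n + (a_n − a_{n+1})·c_n for all n ∈ ℕ. Then s_n ≤ J·L/(γ(n + J)) for all n ∈ ℕ. -/

import Mathlib

/-- Variant of the Sabach–Shtern lemma. -/
theorem stmt_5 (L : ℝ) (hL : 0 < L) (J N : ℕ) (hN : 2 ≤ N) (hJN : N ≤ J)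
    (γ : ℝ) (hγ0 : 0 < γ) (hγ1 : γ ≤ 1)
    (c : ℕ → ℝ) (hc : ∀ n, c n ≤ L)
    (a : ℕ → ℝ) (ha : ∀ n : ℕ, a n = N / (γ * (n + J)))
    (s : ℕ → ℝ) (hs : ∀ n, 0 ≤ s n) (hs0 : s 0 ≤ L)
    (hrec : ∀ n : ℕ, s (n + 1) ≤ (1 - γ * a (n + 1)) * s n + (a n - a (n + 1)) * c n) :
    ∀ n : ℕ, s n ≤ J * L / (γ * (n + J)) := by
  have hNr : (2:ℝ) ≤ (N:ℝ) := by exact_mod_cast hN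
  have hNJ : (N:ℝ) ≤ (J:ℝ) := by exact_mod_cast hJN
  have hJr : (2:ℝ) ≤ (J:ℝ) := le_trans hNr hNJ
  intro n
  induction n with
  | zero =>
    have hpos : (0:ℝ) < γ * ((0:ℕ) + J) := by
      push_cast; positivity
    rw [le_div_iff₀ hpos]
    push_cast
    have h1 : γ * ((0:ℝ) + J) ≤ (J:ℝ) := by nlinarith
    nlinarith [mul_le_mul hs0 h1 (by positivity) hL.le]
  | succ n ih =>
    have hn0 : (0:ℝ) ≤ (n:ℝ) := Nat.cast_nonneg n
    have hd1 : (0:ℝ) < (n:ℝ) + J := by linarith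
    have hd2 : (0:ℝ) < (n:ℝ) + 1 + J := by linarith
    have hrecn := hrec n
    rw [ha n, ha (n+1)] at hrecn
    push_cast at hrecn ⊢
    have hcoef1 : (0:ℝ) ≤ 1 - γ * ((N:ℝ) / (γ * ((n:ℝ) + 1 + J))) := by
      have : γ * ((N:ℝ) / (γ * ((n:ℝ) + 1 + J))) = (N:ℝ) / ((n:ℝ) + 1 + J) := by
        field_simp
      rw [this, sub_nonneg, div_le_one hd2]
      linarith
    have hcoef2 : (0:ℝ) ≤ (N:ℝ) / (γ * ((n:ℝ) + J)) - (N:ℝ) / (γ * ((n:ℝ) + 1 + J)) := by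
      rw [sub_nonneg]
      apply div_le_div_of_nonneg_left (by linarith) (by positivity)
      nlinarith
    have step1 : s (n+1) ≤ (1 - γ * ((N:ℝ) / (γ * ((n:ℝ) + 1 + J)))) * ((J:ℝ) * L / (γ * ((n:ℝ) + J)))
        + ((N:ℝ) / (γ * ((n:ℝ) + J)) - (N:ℝ) / (γ * ((n:ℝ) + 1 + J))) * L := by
      refine le_trans hrecn (add_le_add ?_ ?_)
      · exact mul_le_mul_of_nonneg_left ih hcoef1
      · exact mul_le_mul_of_nonneg_left (hc n) hcoef2
    refine le_trans step1 ?_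
    rw [← sub_nonneg]
    have hx : (J:ℝ) * L / (γ * ((n:ℝ) + 1 + J)) -
        ((1 - γ * ((N:ℝ) / (γ * ((n:ℝ) + 1 + J)))) * ((J:ℝ) * L / (γ * ((n:ℝ) + J)))
        + ((N:ℝ) / (γ * ((n:ℝ) + J)) - (N:ℝ) / (γ * ((n:ℝ) + 1 + J))) * L)
        = L * ((J:ℝ) * N - J - N) / (γ * (((n:ℝ) + J) * ((n:ℝ) + 1 + J))) := by
      field_simp
      ring
    rw [hx]
    have hnum : (0:ℝ) ≤ (J:ℝ) * N - J - N := by nlinarith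
    positivity
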